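/- arXiv:1711.09650 — 3 statements merged into one kernel-verified Lean document; each statement's English description precedes it below -/
import Mathlib

section
/- Let λ ≥ 0 and let φ ∈ P^r satisfy φ' − λ φ − L̂(φ(t₁)) = L(1) on I. Then φ is L²(I)-orthogonal to W^r_λ, i.e. ∫_I φ(t)(v'(t) + λ v(t)) dt = 0 for every v ∈ P^r_0. -/
open Polynomial MeasureTheory intervalIntegral

/-- The rescaled Legendre polynomials on `[t₀, t₁]`: `K i` has degree `i`,
`K i (t₁) = 1`, `K i (t₀) = (-1)^i`, and they are `L²(t₀,t₁)`-orthogonal with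
`∫ K i ^ 2 = (t₁ - t₀)/(2 i + 1)`. -/
def IsLegendreBasis (t₀ t₁ : ℝ) (K : ℕ → Polynomial ℝ) : Prop :=
  (∀ i, (K i).natDegree = i) ∧ (∀ i, (K i).eval t₁ = 1) ∧
  (∀ i, (K i).eval t₀ = (-1 : ℝ) ^ i) ∧
  (∀ i j, (∫ t in t₀..t₁, (K i).eval t * (K j).eval t) =
    if i = j then (t₁ - t₀) / (2 * (i : ℝ) + 1) else 0)

/-- The lifting operator `L(z) = (z/k) ∑_{i=0}^r (-1)^i (2i+1) K_i`. -/
noncomputable def Lop (t₀ t₁ : ℝ) (r : ℕ) (K : ℕ → Polynomial ℝ) (z : ℝ) : Polynomial ℝ :=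
  Polynomial.C (z / (t₁ - t₀)) *
    ∑ i ∈ Finset.range (r + 1), Polynomial.C ((-1 : ℝ) ^ i * (2 * (i : ℝ) + 1)) * K i

/-- The endpoint lifting operator `L̂(z) = (z/k) ∑_{i=0}^r (2i+1) K_i`. -/
noncomputable def LopE (t₀ t₁ : ℝ) (r : ℕ) (K : ℕ → Polynomial ℝ) (z : ℝ) : Polynomial ℝ :=
  Polynomial.C (z / (t₁ - t₀)) *
    ∑ i ∈ Finset.range (r + 1), Polynomial.C (2 * (i : ℝ) + 1) * K i

/-- The scalar dG operator `Γ_λ(v) = v' + L(v(t₀)) + λ v`. -/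
noncomputable def Gam (t₀ t₁ : ℝ) (r : ℕ) (K : ℕ → Polynomial ℝ) (lam : ℝ)
    (v : Polynomial ℝ) : Polynomial ℝ :=
  Polynomial.derivative v + Lop t₀ t₁ r K (v.eval t₀) + Polynomial.C lam * v

private lemma polyII (p q : Polynomial ℝ) (a b : ℝ) :
    IntervalIntegrable (fun t => p.eval t * q.eval t) volume a b :=
  (p.continuous.mul q.continuous).intervalIntegrable a b

/-- Membership in the span of the Legendre basis. -/
private lemma mem_span (t₀ t₁ : ℝ) (K : ℕ → Polynomial ℝ)
    (hdeg : ∀ i, (K i).natDegree = i) (hone : ∀ i, (K i).eval t₁ = 1) :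
    ∀ n (V : Polynomial ℝ), V.natDegree ≤ n →
      V ∈ Submodule.span ℝ (K '' (Set.Iic n)) := by
  intro n
  induction n with
  | zero =>
    intro V hV
    have hK0 : K 0 = Polynomial.C ((K 0).coeff 0) :=
      (Polynomial.eq_C_of_natDegree_eq_zero (hdeg 0))
    have hc : (K 0).coeff 0 = 1 := by
      have := hone 0
      rw [hK0] at this; simpa using this
    have hKC : K 0 = 1 := by rw [hK0, hc]; simp
    have hVC : V = Polynomial.C (V.coeff 0) := Polynomial.eq_C_of_natDegree_eq_zero
      (Nat.le_zero.mp hV)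
    have : V = (V.coeff 0) • K 0 := by
      rw [hKC, hVC]; simp [Polynomial.smul_eq_C_mul]
    rw [this]
    exact Submodule.smul_mem _ _ (Submodule.subset_span ⟨0, by simp, rfl⟩)
  | succ n ih =>
    intro V hV
    rcases le_or_gt V.natDegree n with h | h
    · exact Submodule.span_mono (Set.image_mono (Set.Iic_subset_Iic.mpr n.le_succ)) (ih V h)
    · have hVd : V.natDegree = n + 1 := le_antisymm hV h
      have hKne : K (n + 1) ≠ 0 := by
        intro h0
        have := hone (n + 1)
        rw [h0] at this; simpa using this
      have hlc : (K (n + 1)).coeff (n + 1) ≠ 0 := by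
        have := Polynomial.leadingCoeff_ne_zero.mpr hKne
        rwa [Polynomial.leadingCoeff, hdeg (n + 1)] at this
      set c : ℝ := V.coeff (n + 1) / (K (n + 1)).coeff (n + 1) with hc
      set W : Polynomial ℝ := V - Polynomial.C c * K (n + 1) with hW
      have hWdeg : W.natDegree ≤ n := by
        rw [Polynomial.natDegree_le_iff_coeff_eq_zero]
        intro N hN
        rcases lt_or_ge (n + 1) N with h1 | h1
        · have hV0 : V.coeff N = 0 :=
            Polynomial.coeff_eq_zero_of_natDegree_lt (hVd ▸ h1)
          have hK0 : (K (n + 1)).coeff N = 0 :=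
            Polynomial.coeff_eq_zero_of_natDegree_lt (by rw [hdeg]; exact h1)
          simp [hW, hV0, hK0]
        · have hN1 : N = n + 1 := le_antisymm h1 hN
          subst hN1
          simp [hW, hc, div_mul_cancel₀ _ hlc]
      have hVW : V = W + c • K (n + 1) := by
        simp [hW, Polynomial.smul_eq_C_mul]
      rw [hVW]
      refine Submodule.add_mem _
        (Submodule.span_mono (Set.image_mono (Set.Iic_subset_Iic.mpr n.le_succ)) (ih W hWdeg))
        (Submodule.smul_mem _ _ (Submodule.subset_span ⟨n + 1, by simp, rfl⟩))

/-- If the integral identity holds against each basis element, it holds for all `V` of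
degree at most `r`. -/
private lemma ortho_aux (t₀ t₁ : ℝ) (r : ℕ) (K : ℕ → Polynomial ℝ)
    (hdeg : ∀ i, (K i).natDegree = i) (hone : ∀ i, (K i).eval t₁ = 1)
    (G : Polynomial ℝ) (pt z : ℝ)
    (hbase : ∀ j, j ≤ r → (∫ t in t₀..t₁, G.eval t * (K j).eval t) = z * (K j).eval pt) :
    ∀ V : Polynomial ℝ, V.natDegree ≤ r →
      (∫ t in t₀..t₁, G.eval t * V.eval t) = z * V.eval pt := by
  intro V hV
  have hmem := mem_span t₀ t₁ K hdeg hone r V hV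
  clear hV
  induction hmem using Submodule.span_induction with
  | mem x hx =>
    obtain ⟨j, hj, rfl⟩ := hx
    exact hbase j hj
  | zero => simp
  | add x y hx hy hx' hy' =>
    have := intervalIntegral.integral_add (polyII G x t₀ t₁) (polyII G y t₀ t₁)
    simp only [Polynomial.eval_add, mul_add]
    rw [this, hx', hy']
  | smul a x hx hx' =>
    simp only [Polynomial.eval_smul, smul_eq_mul]
    have : (∫ t in t₀..t₁, G.eval t * (a * x.eval t))
        = a * ∫ t in t₀..t₁, G.eval t * x.eval t := by
      rw [← intervalIntegral.integral_const_mul]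
      congr 1; funext t; ring
    rw [this, hx']; ring

private lemma lift_base (t₀ t₁ : ℝ) (r : ℕ) (K : ℕ → Polynomial ℝ)
    (horth : ∀ i j, (∫ t in t₀..t₁, (K i).eval t * (K j).eval t) =
      if i = j then (t₁ - t₀) / (2 * (i : ℝ) + 1) else 0)
    (s : ℝ) (a : ℕ → ℝ) (j : ℕ) (hj : j < r + 1) :
    (∫ t in t₀..t₁,
        (Polynomial.C s * ∑ i ∈ Finset.range (r + 1), Polynomial.C (a i) * K i).eval t
          * (K j).eval t)
      = s * (a j * ((t₁ - t₀) / (2 * (j : ℝ) + 1))) := by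
  have heq : ∀ t : ℝ,
      (Polynomial.C s * ∑ i ∈ Finset.range (r + 1), Polynomial.C (a i) * K i).eval t
          * (K j).eval t
        = s * ∑ i ∈ Finset.range (r + 1), a i * ((K i).eval t * (K j).eval t) := by
    intro t
    simp only [Polynomial.eval_mul, Polynomial.eval_C, Polynomial.eval_finset_sum,
      Finset.mul_sum, Finset.sum_mul]
    congr 1; funext i; ring
  calc (∫ t in t₀..t₁,
        (Polynomial.C s * ∑ i ∈ Finset.range (r + 1), Polynomial.C (a i) * K i).eval t
          * (K j).eval t)
      = ∫ t in t₀..t₁, s * ∑ i ∈ Finset.range (r + 1),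
          a i * ((K i).eval t * (K j).eval t) := by
        congr 1; funext t; exact heq t
    _ = s * ∑ i ∈ Finset.range (r + 1),
          ∫ t in t₀..t₁, a i * ((K i).eval t * (K j).eval t) := by
        rw [intervalIntegral.integral_const_mul,
          intervalIntegral.integral_finset_sum]
        intro i _
        exact ((continuous_const.mul ((K i).continuous.mul
          (K j).continuous))).intervalIntegrable t₀ t₁
    _ = s * ∑ i ∈ Finset.range (r + 1),
          a i * ∫ t in t₀..t₁, (K i).eval t * (K j).eval t := by
        congr 1; apply Finset.sum_congr rfl; intro i _
        exact intervalIntegral.integral_const_mul _ _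
    _ = s * (a j * ((t₁ - t₀) / (2 * (j : ℝ) + 1))) := by
        congr 1
        rw [Finset.sum_congr rfl (fun i _ => by rw [horth i j])]
        rw [Finset.sum_eq_single j (fun i _ hne => by simp [hne])
          (fun h => absurd (Finset.mem_range.mpr hj) h)]
        simp

/-- The dG dual solution `φ` is `L²(I)`-orthogonal to `W^r_λ = {v' + λ v : v ∈ P^r_0}`. -/
theorem stmt_2 (t₀ t₁ : ℝ) (ht : t₀ < t₁) (r : ℕ) (K : ℕ → Polynomial ℝ)
    (hK : IsLegendreBasis t₀ t₁ K) (lam : ℝ) (hlam : 0 ≤ lam)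
    (φ : Polynomial ℝ) (hφdeg : φ.natDegree ≤ r)
    (hφ : Polynomial.derivative φ - Polynomial.C lam * φ - LopE t₀ t₁ r K (φ.eval t₁)
      = Lop t₀ t₁ r K 1) :
    ∀ v : Polynomial ℝ, v.natDegree ≤ r → v.eval t₀ = 0 →
      (∫ t in t₀..t₁, φ.eval t * ((Polynomial.derivative v).eval t + lam * v.eval t)) = 0 := by
  obtain ⟨hdeg, hone, hzero, horth⟩ := hK
  intro v hv hv0
  have hk : t₁ - t₀ ≠ 0 := sub_ne_zero.mpr ht.ne'
  set c := φ.eval t₁ with hc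
  -- lifting property of `Lop`
  have hL : (∫ t in t₀..t₁, (Lop t₀ t₁ r K 1).eval t * v.eval t) = v.eval t₀ := by
    have h1 : (1 : ℝ) * v.eval t₀ = v.eval t₀ := one_mul _
    rw [← h1]
    refine ortho_aux t₀ t₁ r K hdeg hone (Lop t₀ t₁ r K 1) t₀ 1 ?_ v hv
    intro j hj
    have h2j : (2 * (j : ℝ) + 1) ≠ 0 := by positivity
    have hb := lift_base t₀ t₁ r K horth (1 / (t₁ - t₀))
      (fun i => (-1 : ℝ) ^ i * (2 * (i : ℝ) + 1)) j (Nat.lt_succ_of_le hj)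
    rw [Lop, hb, hzero j]
    field_simp
  -- lifting property of `LopE`
  have hLE : (∫ t in t₀..t₁, (LopE t₀ t₁ r K c).eval t * v.eval t) = c * v.eval t₁ := by
    refine ortho_aux t₀ t₁ r K hdeg hone (LopE t₀ t₁ r K c) t₁ c ?_ v hv
    intro j hj
    have h2j : (2 * (j : ℝ) + 1) ≠ 0 := by positivity
    have hb := lift_base t₀ t₁ r K horth (c / (t₁ - t₀))
      (fun i => (2 * (i : ℝ) + 1)) j (Nat.lt_succ_of_le hj)
    rw [LopE, hb, hone j]
    field_simp
  -- integration by parts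
  have hparts : (∫ t in t₀..t₁, φ.eval t * (Polynomial.derivative v).eval t)
      = φ.eval t₁ * v.eval t₁ - φ.eval t₀ * v.eval t₀
        - ∫ t in t₀..t₁, (Polynomial.derivative φ).eval t * v.eval t :=
    intervalIntegral.integral_mul_deriv_eq_deriv_mul
      (fun x _ => φ.hasDerivAt x) (fun x _ => v.hasDerivAt x)
      ((Polynomial.derivative φ).continuous.intervalIntegrable t₀ t₁)
      ((Polynomial.derivative v).continuous.intervalIntegrable t₀ t₁)
  -- split the target integral
  have hsplit : (∫ t in t₀..t₁, φ.eval t * ((Polynomial.derivative v).eval t + lam * v.eval t))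
      = (∫ t in t₀..t₁, φ.eval t * (Polynomial.derivative v).eval t)
        + lam * ∫ t in t₀..t₁, φ.eval t * v.eval t := by
    calc (∫ t in t₀..t₁, φ.eval t * ((Polynomial.derivative v).eval t + lam * v.eval t))
        = ∫ t in t₀..t₁, φ.eval t * (Polynomial.derivative v).eval t
            + lam * (φ.eval t * v.eval t) := by congr 1; funext t; ring
      _ = (∫ t in t₀..t₁, φ.eval t * (Polynomial.derivative v).eval t)
            + ∫ t in t₀..t₁, lam * (φ.eval t * v.eval t) :=
          intervalIntegral.integral_add (polyII φ _ t₀ t₁)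
            ((continuous_const.mul (φ.continuous.mul v.continuous)).intervalIntegrable t₀ t₁)
      _ = _ := by rw [intervalIntegral.integral_const_mul]
  -- the equation for `derivative φ`
  have hder : Polynomial.derivative φ
      = Lop t₀ t₁ r K 1 + LopE t₀ t₁ r K c + Polynomial.C lam * φ := by
    linear_combination hφ
  -- compute `∫ φ' v`
  have hφ'v : (∫ t in t₀..t₁, (Polynomial.derivative φ).eval t * v.eval t)
      = v.eval t₀ + c * v.eval t₁ + lam * ∫ t in t₀..t₁, φ.eval t * v.eval t := by
    rw [hder]
    calc (∫ t in t₀..t₁,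
          (Lop t₀ t₁ r K 1 + LopE t₀ t₁ r K c + Polynomial.C lam * φ).eval t * v.eval t)
        = ∫ t in t₀..t₁, (Lop t₀ t₁ r K 1).eval t * v.eval t
            + ((LopE t₀ t₁ r K c).eval t * v.eval t + lam * (φ.eval t * v.eval t)) := by
          congr 1; funext t
          simp only [Polynomial.eval_add, Polynomial.eval_mul, Polynomial.eval_C]
          ring
      _ = (∫ t in t₀..t₁, (Lop t₀ t₁ r K 1).eval t * v.eval t)
            + ∫ t in t₀..t₁,
              ((LopE t₀ t₁ r K c).eval t * v.eval t + lam * (φ.eval t * v.eval t)) :=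
          intervalIntegral.integral_add (polyII _ _ t₀ t₁)
            ((((LopE t₀ t₁ r K c).continuous.mul v.continuous).add
              (continuous_const.mul (φ.continuous.mul v.continuous))).intervalIntegrable t₀ t₁)
      _ = (∫ t in t₀..t₁, (Lop t₀ t₁ r K 1).eval t * v.eval t)
            + ((∫ t in t₀..t₁, (LopE t₀ t₁ r K c).eval t * v.eval t)
              + ∫ t in t₀..t₁, lam * (φ.eval t * v.eval t)) := by
          rw [intervalIntegral.integral_add (f := fun t => (LopE t₀ t₁ r K c).eval t * v.eval t)
            (g := fun t => lam * (φ.eval t * v.eval t)) (polyII _ _ t₀ t₁)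
            ((continuous_const.mul (φ.continuous.mul v.continuous)).intervalIntegrable t₀ t₁)]
      _ = v.eval t₀ + c * v.eval t₁ + lam * ∫ t in t₀..t₁, φ.eval t * v.eval t := by
          rw [hL, hLE, intervalIntegral.integral_const_mul]; ring
  rw [hsplit, hparts, hφ'v, hv0]
  ring
end

section
/- Let λ > 0, let φ ∈ P^r satisfy φ' − λ φ − L̂(φ(t₁)) = L(1) on I, and write φ = Σ_{i=0}^r a_i K_i in the rescaled Legendre basis. Then: a_0 = −(1 + φ(t₀))/(kλ); if r ≥ 1 then a_1 = −(3/λ)(2/k + λ) a_0; a_i = (2i+1)( a_{i−2}/(2i−3) − 2 a_{i−1}/(kλ) ) for all 2 ≤ i ≤ r; and moreover a_i ≠ 0 with sign(a_i) = (−1)^{i+1} for all 0 ≤ i ≤ r. -/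
open Polynomial MeasureTheory intervalIntegral

noncomputable def Jint (t₀ t₁ : ℝ) (p : Polynomial ℝ) : ℝ := ∫ t in t₀..t₁, p.eval t

lemma Jint_add (t₀ t₁ : ℝ) (p q : Polynomial ℝ) :
    Jint t₀ t₁ (p + q) = Jint t₀ t₁ p + Jint t₀ t₁ q := by
  unfold Jint
  simp only [eval_add]
  exact intervalIntegral.integral_add (p.continuous.intervalIntegrable _ _)
    (q.continuous.intervalIntegrable _ _)

lemma Jint_sub (t₀ t₁ : ℝ) (p q : Polynomial ℝ) :
    Jint t₀ t₁ (p - q) = Jint t₀ t₁ p - Jint t₀ t₁ q := by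
  unfold Jint
  simp only [eval_sub]
  exact intervalIntegral.integral_sub (p.continuous.intervalIntegrable _ _)
    (q.continuous.intervalIntegrable _ _)

lemma Jint_Cmul (t₀ t₁ : ℝ) (c : ℝ) (p : Polynomial ℝ) :
    Jint t₀ t₁ (C c * p) = c * Jint t₀ t₁ p := by
  unfold Jint
  simp only [eval_mul, eval_C]
  exact intervalIntegral.integral_const_mul c _

lemma Jint_zero (t₀ t₁ : ℝ) : Jint t₀ t₁ 0 = 0 := by
  unfold Jint; simp

lemma Jint_sum (t₀ t₁ : ℝ) {ι : Type*} (s : Finset ι) (f : ι → Polynomial ℝ) :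
    Jint t₀ t₁ (∑ i ∈ s, f i) = ∑ i ∈ s, Jint t₀ t₁ (f i) := by
  classical
  induction s using Finset.induction with
  | empty => simp [Jint_zero]
  | @insert _ _ h ih => rw [Finset.sum_insert h, Finset.sum_insert h, Jint_add, ih]

lemma Jint_derivative (t₀ t₁ : ℝ) (p : Polynomial ℝ) :
    Jint t₀ t₁ (derivative p) = p.eval t₁ - p.eval t₀ := by
  unfold Jint
  apply intervalIntegral.integral_eq_sub_of_hasDerivAt
  · intro x _; exact p.hasDerivAt x
  · exact (derivative p).continuous.intervalIntegrable _ _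
lemma Jint_KK (t₀ t₁ : ℝ) (K : ℕ → Polynomial ℝ) (hK : IsLegendreBasis t₀ t₁ K) (i j : ℕ) :
    Jint t₀ t₁ (K i * K j) = if i = j then (t₁ - t₀) / (2 * (i : ℝ) + 1) else 0 := by
  unfold Jint; simp only [eval_mul]; exact hK.2.2.2 i j

lemma K_ne_zero (t₀ t₁ : ℝ) (K : ℕ → Polynomial ℝ) (hK : IsLegendreBasis t₀ t₁ K) (i : ℕ) :
    K i ≠ 0 := by
  intro h
  have := hK.2.1 i
  rw [h] at this
  simp at this

lemma Jint_low_mul_K (t₀ t₁ : ℝ) (K : ℕ → Polynomial ℝ) (hK : IsLegendreBasis t₀ t₁ K) :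
    ∀ n (p : Polynomial ℝ), p.natDegree ≤ n → ∀ j, n < j → Jint t₀ t₁ (p * K j) = 0 := by
  intro n
  induction n with
  | zero =>
    intro p hp j hj
    have hK0 : K 0 = 1 := by
      have h0 : K 0 = C ((K 0).coeff 0) := (K 0).eq_C_of_natDegree_le_zero (le_of_eq (hK.1 0))
      have h1 : (K 0).eval t₁ = 1 := hK.2.1 0
      rw [h0] at h1 ⊢
      simp only [eval_C] at h1
      rw [h1, map_one]
    have hpc : p = C (p.coeff 0) * K 0 := by
      rw [hK0, mul_one]; exact p.eq_C_of_natDegree_le_zero hp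
    rw [hpc, mul_assoc, Jint_Cmul, Jint_KK t₀ t₁ K hK]
    rw [if_neg (by omega)]; ring
  | succ n ih =>
    intro p hp j hj
    set c := p.coeff (n+1) / (K (n+1)).leadingCoeff with hc
    set q := p - C c * K (n+1) with hq
    have hlc : (K (n+1)).leadingCoeff ≠ 0 :=
      leadingCoeff_ne_zero.mpr (K_ne_zero t₀ t₁ K hK (n+1))
    have hqdeg : q.natDegree ≤ n := by
      rw [natDegree_le_iff_coeff_eq_zero]
      intro m hm
      rw [hq]
      simp only [coeff_sub, coeff_C_mul]
      rcases eq_or_lt_of_le (Nat.succ_le_of_lt hm) with h | h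
      · have : (K (n+1)).coeff m = (K (n+1)).leadingCoeff := by
          rw [leadingCoeff, hK.1 (n+1), ← h]
        rw [this, hc, div_mul_cancel₀ _ hlc, ← h]
        ring
      · have h1 : p.coeff m = 0 := coeff_eq_zero_of_natDegree_lt (lt_of_le_of_lt hp h)
        have h2 : (K (n+1)).coeff m = 0 := by
          apply coeff_eq_zero_of_natDegree_lt
          rw [hK.1 (n+1)]; exact h
        rw [h1, h2]; ring
    have hpq : p = q + C c * K (n+1) := by rw [hq]; ring
    rw [hpq, add_mul, Jint_add, ih q hqdeg j (lt_trans (Nat.lt_succ_self n) hj),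
      mul_assoc, Jint_Cmul, Jint_KK t₀ t₁ K hK]
    have : n + 1 ≠ j := Nat.ne_of_lt hj
    simp [this]
noncomputable def betaSeq (c : ℝ) : ℕ → ℝ
  | 0 => 1
  | 1 => 3 * (2 + c) / c
  | (n+2) => (2*(n:ℝ)+5) * (betaSeq c n / (2*(n:ℝ)+1) + 2 * betaSeq c (n+1) / c)

lemma betaSeq_zero (c : ℝ) : betaSeq c 0 = 1 := rfl
lemma betaSeq_one (c : ℝ) : betaSeq c 1 = 3 * (2 + c) / c := rfl
lemma betaSeq_two (c : ℝ) (n : ℕ) :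
    betaSeq c (n+2) = (2*(n:ℝ)+5) * (betaSeq c n / (2*(n:ℝ)+1) + 2 * betaSeq c (n+1) / c) := rfl

lemma betaSeq_inv (c : ℝ) (hc : 0 < c) : ∀ n : ℕ,
    0 < betaSeq c n ∧ 0 < betaSeq c (n+1) ∧
    (2*(n:ℝ)+3) * betaSeq c n ≤ (2*(n:ℝ)+1) * betaSeq c (n+1) ∧
    c * (2*(n:ℝ)+1) * betaSeq c (n+1) ≤
      (2*(n:ℝ)+3) * (c * betaSeq c n + 2 * (2*(n:ℝ)+1) * betaSeq c n) := by
  intro n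
  induction n with
  | zero =>
    rw [betaSeq_zero, betaSeq_one]
    have h1 : 3 * (2 + c) / c = 3 + 6 / c := by field_simp; ring
    rw [h1]
    have h2 : 0 < 6 / c := by positivity
    have h3 : c * (3 + 6 / c) = 3 * c + 6 := by field_simp
    refine ⟨one_pos, ?_, ?_, ?_⟩
    · linarith
    · norm_num
      linarith
    · norm_num
      nlinarith
  | succ n ih =>
    obtain ⟨hx, hy, hQ, hR⟩ := ih
    set x := betaSeq c n
    set y := betaSeq c (n+1)
    have hz : betaSeq c (n+2) = (2*(n:ℝ)+5) * (x / (2*(n:ℝ)+1) + 2 * y / c) := betaSeq_two c n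
    set z := betaSeq c (n+2)
    have hd : (0:ℝ) < 2*(n:ℝ)+1 := by positivity
    have hrec : c * (2*(n:ℝ)+1) * z = (2*(n:ℝ)+5) * (c * x + 2 * (2*(n:ℝ)+1) * y) := by
      rw [hz]; field_simp
    have hxy : x ≤ y := by nlinarith
    have hzpos : 0 < z := by rw [hz]; positivity
    have hA : (2*(n:ℝ)+3) * (c * (2*(n:ℝ)+1) * z)
        = (2*(n:ℝ)+3) * ((2*(n:ℝ)+5) * (c * x + 2 * (2*(n:ℝ)+1) * y)) := by rw [hrec]
    have hB : (2*(n:ℝ)+5) * (c * (2*(n:ℝ)+1) * y)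
        ≤ (2*(n:ℝ)+5) * ((2*(n:ℝ)+3) * (c * x + 2 * (2*(n:ℝ)+1) * x)) :=
      mul_le_mul_of_nonneg_left hR (by positivity)
    have hC : (2*(2*(n:ℝ)+1)*(2*(n:ℝ)+3)*(2*(n:ℝ)+5)) * x
        ≤ (2*(2*(n:ℝ)+1)*(2*(n:ℝ)+3)*(2*(n:ℝ)+5)) * y :=
      mul_le_mul_of_nonneg_left hxy (by positivity)
    have hD : c * ((2*(n:ℝ)+3) * x) ≤ c * ((2*(n:ℝ)+1) * y) :=
      mul_le_mul_of_nonneg_left hQ hc.le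
    have hE : (2*(n:ℝ)+5) * (c * ((2*(n:ℝ)+3) * x)) ≤ (2*(n:ℝ)+5) * (c * ((2*(n:ℝ)+1) * y)) :=
      mul_le_mul_of_nonneg_left hD (by positivity)
    refine ⟨hy, hzpos, ?_, ?_⟩
    · have hQ' : c*(2*(n:ℝ)+1) * ((2*(n:ℝ)+5)*y) ≤ c*(2*(n:ℝ)+1) * ((2*(n:ℝ)+3)*z) := by
        nlinarith [hA, hB, hC]
      have := le_of_mul_le_mul_left hQ' (show (0:ℝ) < c*(2*(n:ℝ)+1) by positivity)
      push_cast
      linarith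
    · have hR' : (2*(n:ℝ)+1) * (c*(2*(n:ℝ)+3)*z)
          ≤ (2*(n:ℝ)+1) * ((2*(n:ℝ)+5)*(c*y + 2*(2*(n:ℝ)+3)*y)) := by
        nlinarith [hA, hE]
      have := le_of_mul_le_mul_left hR' hd
      push_cast
      linarith

lemma betaSeq_pos (c : ℝ) (hc : 0 < c) (n : ℕ) : 0 < betaSeq c n := (betaSeq_inv c hc n).1

lemma betaSeq_mono (c : ℝ) (hc : 0 < c) (n : ℕ) : betaSeq c n ≤ betaSeq c (n+1) := by
  obtain ⟨hx, hy, hQ, _⟩ := betaSeq_inv c hc n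
  nlinarith

noncomputable def altSum (c : ℝ) (n : ℕ) : ℝ :=
  ∑ j ∈ Finset.range (n+1), (-1:ℝ)^(n+j) * betaSeq c j

lemma altSum_pos (c : ℝ) (hc : 0 < c) : ∀ n, 0 < altSum c n ∧ 0 < altSum c (n+1) := by
  intro n
  induction n with
  | zero =>
    constructor
    · simp [altSum, betaSeq_zero]
    · have h1 : altSum c 1 = betaSeq c 1 - 1 := by
        simp [altSum, Finset.sum_range_succ, betaSeq_zero]
        ring
      rw [h1, betaSeq_one]
      have h2 : 3 * (2 + c) / c = 3 + 6 / c := by field_simp; ring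
      rw [h2]
      have : 0 < 6 / c := by positivity
      linarith
  | succ n ih =>
    refine ⟨ih.2, ?_⟩
    have hstep : altSum c (n+2) = altSum c n + (betaSeq c (n+2) - betaSeq c (n+1)) := by
      unfold altSum
      rw [Finset.sum_range_succ, Finset.sum_range_succ]
      have h1 : ∀ j ∈ Finset.range (n+1), (-1:ℝ)^(n+2+j) * betaSeq c j
          = (-1:ℝ)^(n+j) * betaSeq c j := by
        intro j _
        congr 1
        have he : n+2+j = (n+j)+2 := by omega
        rw [he, pow_add]
        norm_num
      rw [Finset.sum_congr rfl h1]
      have h2 : (-1:ℝ)^(n+2+(n+1)) = -1 := by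
        have he : n+2+(n+1) = 2*(n+1)+1 := by omega
        rw [he, pow_succ, pow_mul]
        norm_num
      have h3 : (-1:ℝ)^(n+2+(n+2)) = 1 := by
        have he : n+2+(n+2) = 2*(n+2) := by omega
        rw [he, pow_mul]
        norm_num
      rw [h2, h3]
      ring
    have := betaSeq_mono c hc (n+1)
    have := ih.1
    linarith [hstep]
lemma algebra_main (k lam : ℝ) (hk : 0 < k) (hlam : 0 < lam) (r : ℕ) (a : ℕ → ℝ)
    (E : ∀ j, j ≤ r →
      (∑ i ∈ Finset.range (r+1), if j < i then a i * (1 - (-1:ℝ)^(i+j)) else 0)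
        - lam * (k * a j / (2*(j:ℝ)+1)) - (∑ i ∈ Finset.range (r+1), a i) = (-1:ℝ)^j) :
    a 0 = -(1 + ∑ i ∈ Finset.range (r+1), (-1:ℝ)^i * a i) / (k * lam) ∧
    (1 ≤ r → a 1 = -(3 / lam) * (2 / k + lam) * a 0) ∧
    (∀ i, 2 ≤ i → i ≤ r →
      a i = (2 * (i : ℝ) + 1) * (a (i - 2) / (2 * (i : ℝ) - 3) - 2 * a (i - 1) / (k * lam))) ∧
    (∀ i, i ≤ r → a i ≠ 0 ∧ 0 < (-1 : ℝ) ^ (i + 1) * a i) := by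
  have hkl : 0 < k * lam := mul_pos hk hlam
  set T : ℕ → ℝ := fun j => ∑ i ∈ Finset.range (r+1),
    if j < i then a i * (1 - (-1:ℝ)^(i+j)) else 0 with hT
  set S : ℝ := ∑ i ∈ Finset.range (r+1), a i with hS
  set S0 : ℝ := ∑ i ∈ Finset.range (r+1), (-1:ℝ)^i * a i with hS0
  have E' : ∀ j, j ≤ r → T j - lam * (k * a j / (2*(j:ℝ)+1)) - S = (-1:ℝ)^j := E
  -- T 0 = S - S0
  have hT0 : T 0 = S - S0 := by
    rw [hT, hS, hS0]
    simp only
    rw [← Finset.sum_sub_distrib]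
    apply Finset.sum_congr rfl
    intro i _
    rcases Nat.eq_zero_or_pos i with h | h
    · subst h; simp
    · rw [if_pos h, add_zero]; ring
  -- T r = 0
  have hTr : T r = 0 := by
    apply Finset.sum_eq_zero
    intro i hi
    rw [if_neg (by simp at hi; omega)]
  -- T 0 + T 1 = 2 * (S - a 0)
  have hsum01 : T 0 + T 1 = 2 * (S - a 0) := by
    rw [hT, hS]
    simp only
    rw [← Finset.sum_add_distrib]
    have key : ∀ i ∈ Finset.range (r+1),
        ((if 0 < i then a i * (1 - (-1:ℝ)^(i+0)) else 0) +
         (if 1 < i then a i * (1 - (-1:ℝ)^(i+1)) else 0))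
        = 2 * (if 0 < i then a i else 0) := by
      intro i _
      rcases Nat.lt_or_ge i 1 with h | h
      · interval_cases i
        simp
      rcases Nat.lt_or_ge i 2 with h2 | h2
      · interval_cases i
        norm_num [mul_comm]
      · rw [if_pos (by omega), if_pos (by omega), if_pos (by omega), add_zero,
          pow_succ]
        ring
    rw [Finset.sum_congr rfl key, ← Finset.mul_sum]
    congr 1
    rw [Finset.sum_range_succ' _ r, Finset.sum_range_succ' (fun i => a i) r]
    simp
  -- T j - T (j+2) = 2 * a (j+1)
  have hdiff : ∀ j, j + 1 ≤ r → T j - T (j+2) = 2 * a (j+1) := by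
    intro j hj
    rw [hT]
    simp only
    rw [← Finset.sum_sub_distrib]
    rw [Finset.sum_eq_single_of_mem (j+1) (by simp; omega)]
    · rw [if_pos (by omega), if_neg (by omega), sub_zero,
        show j+1+j = 2*j+1 by omega, pow_succ, pow_mul]
      norm_num [mul_comm]
    · intro i _ hne
      rcases Nat.lt_or_ge j i with h | h
      · rcases Nat.lt_or_ge (j+2) i with h2 | h2
        · rw [if_pos h, if_pos h2, show i+(j+2) = (i+j)+2 by omega, pow_add]
          ring_nf
        · have : i = j + 2 := by omega
          subst this
          rw [if_pos h, if_neg (by omega), show j+2+j = 2*(j+1) by omega, pow_mul]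
          norm_num
      · rw [if_neg (by omega), if_neg (by omega), sub_zero]
  -- first conclusion
  have e0 := E' 0 (Nat.zero_le r)
  rw [hT0] at e0
  norm_num at e0
  have ha0 : (k * lam) * a 0 = -(1 + S0) := by linarith [e0]
  have con1 : a 0 = -(1 + S0) / (k * lam) := by
    rw [eq_div_iff hkl.ne']
    linarith [ha0]
  -- second conclusion
  have con2 : 1 ≤ r → a 1 = -(3 / lam) * (2 / k + lam) * a 0 := by
    intro h1r
    have e1 := E' 1 h1r
    norm_num at e1
    have ha1 : (k*lam) * a 1 = -3 * (2 + k*lam) * a 0 := by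
      linarith [e0, e1, hsum01, hT0]
    have ha1' : a 1 = -3 * (2 + k*lam) * a 0 / (k*lam) := by
      rw [eq_div_iff hkl.ne']
      linarith [ha1]
    rw [ha1']
    field_simp
  -- third conclusion
  have con3 : ∀ i, 2 ≤ i → i ≤ r →
      a i = (2 * (i : ℝ) + 1) * (a (i - 2) / (2 * (i : ℝ) - 3) - 2 * a (i - 1) / (k * lam)) := by
    intro i h2i hir
    obtain ⟨j, rfl⟩ : ∃ j, i = j + 2 := ⟨i - 2, by omega⟩
    have ej := E' j (by omega)
    have ej2 := E' (j+2) hir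
    have hd := hdiff j (by omega)
    rw [show ((-1:ℝ)^(j+2)) = (-1:ℝ)^j by rw [pow_add]; norm_num] at ej2
    push_cast at ej2
    rw [show 2*((j:ℝ)+2)+1 = 2*(j:ℝ)+5 by ring] at ej2
    have hu1 : (2*(j:ℝ)+1) ≠ 0 := by positivity
    have hu5 : (2*(j:ℝ)+5) ≠ 0 := by positivity
    have key : lam * (k * a j / (2*(j:ℝ)+1)) - lam * (k * a (j+2) / (2*(j:ℝ)+5))
        = 2 * a (j+1) := by
      linarith [ej, ej2, hd]
    simp only [Nat.add_sub_cancel]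
    rw [show j+2-1 = j+1 by omega]
    push_cast
    rw [show 2*((j:ℝ)+2)+1 = 2*(j:ℝ)+5 by ring, show 2*((j:ℝ)+2)-3 = 2*(j:ℝ)+1 by ring]
    field_simp at key ⊢
    linear_combination (-1 : ℝ) * key
  -- fourth conclusion : coefficients in terms of betaSeq
  set c : ℝ := k * lam with hc
  have hb : ∀ i, i ≤ r → a i = (-1:ℝ)^(i+1) * betaSeq c i * (-(a 0)) := by
    intro i
    induction i using Nat.strong_induction_on with
    | _ i ih =>
      match i with
      | 0 =>
        intro _
        show a 0 = (-1:ℝ)^(0+1) * betaSeq c 0 * (-(a 0))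
        rw [betaSeq_zero]
        ring
      | 1 =>
        intro h1r
        rw [con2 h1r]
        show _ = (-1:ℝ)^2 * betaSeq c 1 * (-(a 0))
        rw [betaSeq_one, hc]
        field_simp
      | (n+2) =>
        intro hir
        have ihn := ih n (by omega) (by omega)
        have ihn1 := ih (n+1) (by omega) (by omega)
        have h3 := con3 (n+2) (by omega) hir
        simp only [Nat.add_sub_cancel] at h3
        rw [show n+2-1 = n+1 by omega] at h3
        rw [h3, ihn, ihn1, betaSeq_two]
        push_cast
        have hu1 : (2*(n:ℝ)+1) ≠ 0 := by positivity
        rw [show 2*((n:ℝ)+2)-3 = 2*(n:ℝ)+1 by ring]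
        rw [show n+1+1 = n+2 by omega, show n+2+1 = n+3 by omega,
          show ((-1:ℝ))^(n+3) = (-1)^n * (-1) by
            rw [pow_add]; norm_num,
          show ((-1:ℝ))^(n+2) = (-1)^n by
            rw [pow_add]; norm_num,
          show ((-1:ℝ))^(n+1) = (-1)^n * (-1) by
            rw [pow_add]; norm_num]
        rw [hc]
        field_simp
        ring
  set b₀ := -(a 0) with hb0
  have hSb : S = ∑ i ∈ Finset.range (r+1), (-1:ℝ)^(i+1) * betaSeq c i * b₀ := by
    rw [hS]
    apply Finset.sum_congr rfl
    intro i hi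
    exact hb i (by simp at hi; omega)
  have er := E' r le_rfl
  rw [hTr] at er
  have har : a r = (-1:ℝ)^(r+1) * betaSeq c r * b₀ := hb r le_rfl
  have hrr : ((-1:ℝ)^r) * ((-1:ℝ)^r) = 1 := by
    rw [← pow_add, show r+r = 2*r by omega, pow_mul]; norm_num
  have h1 : (-1:ℝ)^r * S + (altSum c r) * b₀ = 0 := by
    rw [hSb, Finset.mul_sum, altSum, Finset.sum_mul, ← Finset.sum_add_distrib]
    apply Finset.sum_eq_zero
    intro i _
    rw [show r+i = i+r by omega, pow_add, pow_succ]
    ring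
  set D : ℝ := c * betaSeq c r / (2*(r:ℝ)+1) with hD
  have h2 : (-1:ℝ)^r * (lam * (k * a r / (2*(r:ℝ)+1))) = -D * b₀ := by
    rw [har, pow_succ, hD, hc]
    have hu : (2*(r:ℝ)+1) ≠ 0 := by positivity
    field_simp [hu]
    rw [sq, hrr, one_mul]
  have key : (-1:ℝ)^r * (lam * (k * a r / (2*(r:ℝ)+1))) + (-1:ℝ)^r * S = -1 := by
    have h3 : lam * (k * a r / (2*(r:ℝ)+1)) + S = -((-1:ℝ)^r) := by linarith [er]
    have h4 := congrArg (fun x => (-1:ℝ)^r * x) h3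
    simp only [mul_add, mul_neg] at h4
    rw [hrr] at h4
    exact h4
  have hclose : b₀ * (altSum c r + D) = 1 := by
    rw [h2] at key
    linarith [key, h1]
  have hBpos : 0 < altSum c r + D := by
    have hA := (altSum_pos c hkl r).1
    have hB := betaSeq_pos c hkl r
    have h1' : 0 < D := by rw [hD]; positivity
    linarith
  have hb0pos : 0 < b₀ := by
    nlinarith [hclose, hBpos]
  have con4 : ∀ i, i ≤ r → a i ≠ 0 ∧ 0 < (-1 : ℝ) ^ (i + 1) * a i := by
    intro i hir
    have h := hb i hir
    have hβ : 0 < betaSeq c i := betaSeq_pos c hkl i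
    have hsq : ((-1:ℝ)^(i+1)) * ((-1:ℝ)^(i+1)) = 1 := by
      rw [← pow_add, show (i+1)+(i+1) = 2*(i+1) by omega, pow_mul]; norm_num
    constructor
    · rw [h]
      exact mul_ne_zero (mul_ne_zero (pow_ne_zero _ (by norm_num)) hβ.ne') hb0pos.ne'
    · have heq : (-1:ℝ)^(i+1) * a i = betaSeq c i * b₀ := by
        rw [h]
        linear_combination (betaSeq c i * b₀) * hsq
      rw [heq]
      exact mul_pos hβ hb0pos
  exact ⟨con1, con2, con3, con4⟩
lemma K0_eq_one (t₀ t₁ : ℝ) (K : ℕ → Polynomial ℝ) (hK : IsLegendreBasis t₀ t₁ K) :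
    K 0 = 1 := by
  have h0 : K 0 = C ((K 0).coeff 0) := (K 0).eq_C_of_natDegree_le_zero (le_of_eq (hK.1 0))
  have h1 : (K 0).eval t₁ = 1 := hK.2.1 0
  rw [h0] at h1 ⊢
  simp only [eval_C] at h1
  rw [h1, map_one]

lemma Jint_dK_K (t₀ t₁ : ℝ) (K : ℕ → Polynomial ℝ) (hK : IsLegendreBasis t₀ t₁ K) (i j : ℕ) :
    Jint t₀ t₁ (derivative (K i) * K j) = if j < i then 1 - (-1:ℝ)^(i+j) else 0 := by
  by_cases hji : j < i
  · rw [if_pos hji]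
    have hmul : derivative (K i) * K j = derivative (K i * K j) - K i * derivative (K j) := by
      rw [derivative_mul]; ring
    rw [hmul, Jint_sub, Jint_derivative]
    have h0 : Jint t₀ t₁ (K i * derivative (K j)) = 0 := by
      rw [mul_comm]
      apply Jint_low_mul_K t₀ t₁ K hK (i-1) _ ?_ i (by omega)
      calc (derivative (K j)).natDegree ≤ (K j).natDegree - 1 := natDegree_derivative_le _
        _ ≤ i - 1 := by rw [hK.1 j]; omega
    rw [h0, eval_mul, eval_mul, hK.2.1 i, hK.2.1 j, hK.2.2.1 i, hK.2.2.1 j, pow_add]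
    ring
  · rw [if_neg hji]
    rcases Nat.eq_zero_or_pos i with h | h
    · subst h
      rw [K0_eq_one t₀ t₁ K hK]
      simp only [derivative_one, zero_mul]
      simp [Jint]
    · apply Jint_low_mul_K t₀ t₁ K hK (i-1) _ ?_ j (by omega)
      calc (derivative (K i)).natDegree ≤ (K i).natDegree - 1 := natDegree_derivative_le _
        _ ≤ i - 1 := by rw [hK.1 i]

/-- Recursion formulas and sign alternation for the rescaled Legendre coefficients of the
dG dual solution `φ = ∑_{i=0}^r a_i K_i`. -/
theorem stmt_5 (t₀ t₁ : ℝ) (ht : t₀ < t₁) (r : ℕ) (K : ℕ → Polynomial ℝ)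
    (hK : IsLegendreBasis t₀ t₁ K) (lam : ℝ) (hlam : 0 < lam)
    (φ : Polynomial ℝ) (hφdeg : φ.natDegree ≤ r)
    (hφ : Polynomial.derivative φ - Polynomial.C lam * φ - LopE t₀ t₁ r K (φ.eval t₁)
      = Lop t₀ t₁ r K 1)
    (a : ℕ → ℝ) (hrep : φ = ∑ i ∈ Finset.range (r + 1), Polynomial.C (a i) * K i) :
    a 0 = -(1 + φ.eval t₀) / ((t₁ - t₀) * lam) ∧
    (1 ≤ r → a 1 = -(3 / lam) * (2 / (t₁ - t₀) + lam) * a 0) ∧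
    (∀ i, 2 ≤ i → i ≤ r →
      a i = (2 * (i : ℝ) + 1) *
        (a (i - 2) / (2 * (i : ℝ) - 3) - 2 * a (i - 1) / ((t₁ - t₀) * lam))) ∧
    (∀ i, i ≤ r → a i ≠ 0 ∧ 0 < (-1 : ℝ) ^ (i + 1) * a i) := by
  have hk : (0:ℝ) < t₁ - t₀ := sub_pos.mpr ht
  have heval1 : φ.eval t₁ = ∑ i ∈ Finset.range (r+1), a i := by
    rw [hrep, eval_finset_sum]
    apply Finset.sum_congr rfl
    intro i _
    rw [eval_mul, eval_C, hK.2.1 i, mul_one]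
  have heval0 : φ.eval t₀ = ∑ i ∈ Finset.range (r+1), (-1:ℝ)^i * a i := by
    rw [hrep, eval_finset_sum]
    apply Finset.sum_congr rfl
    intro i _
    rw [eval_mul, eval_C, hK.2.2.1 i]
    ring
  have hphiK : ∀ j, j ≤ r → Jint t₀ t₁ (φ * K j) = (t₁ - t₀) * a j / (2*(j:ℝ)+1) := by
    intro j hj
    rw [hrep, Finset.sum_mul, Jint_sum]
    rw [Finset.sum_congr rfl (fun i _ => by
      rw [mul_assoc, Jint_Cmul, Jint_KK t₀ t₁ K hK])]
    rw [Finset.sum_eq_single_of_mem j (by simp; omega)]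
    · rw [if_pos rfl]; ring
    · intro i _ hne
      rw [if_neg hne, mul_zero]
  have hLopK : ∀ z j, j ≤ r → Jint t₀ t₁ (Lop t₀ t₁ r K z * K j) = z * (-1:ℝ)^j := by
    intro z j hj
    rw [Lop, mul_assoc, Jint_Cmul, Finset.sum_mul, Jint_sum]
    rw [Finset.sum_congr rfl (fun i _ => by
      rw [mul_assoc, Jint_Cmul, Jint_KK t₀ t₁ K hK])]
    rw [Finset.sum_eq_single_of_mem j (by simp; omega)]
    · rw [if_pos rfl]
      have h2j : (2*(j:ℝ)+1) ≠ 0 := by positivity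
      field_simp
    · intro i _ hne
      rw [if_neg hne, mul_zero]
  have hLopEK : ∀ z j, j ≤ r → Jint t₀ t₁ (LopE t₀ t₁ r K z * K j) = z := by
    intro z j hj
    rw [LopE, mul_assoc, Jint_Cmul, Finset.sum_mul, Jint_sum]
    rw [Finset.sum_congr rfl (fun i _ => by
      rw [mul_assoc, Jint_Cmul, Jint_KK t₀ t₁ K hK])]
    rw [Finset.sum_eq_single_of_mem j (by simp; omega)]
    · rw [if_pos rfl]
      have h2j : (2*(j:ℝ)+1) ≠ 0 := by positivity
      field_simp
    · intro i _ hne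
      rw [if_neg hne, mul_zero]
  have hdphiK : ∀ j, Jint t₀ t₁ (Polynomial.derivative φ * K j)
      = ∑ i ∈ Finset.range (r+1), (if j < i then a i * (1-(-1:ℝ)^(i+j)) else 0) := by
    intro j
    rw [hrep, derivative_sum]
    rw [Finset.sum_congr rfl (fun i _ => derivative_C_mul _ _)]
    rw [Finset.sum_mul, Jint_sum]
    rw [Finset.sum_congr rfl (fun i _ => by
      rw [mul_assoc, Jint_Cmul, Jint_dK_K t₀ t₁ K hK])]
    apply Finset.sum_congr rfl
    intro i _
    rw [mul_ite, mul_zero]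
  have E : ∀ j, j ≤ r →
      (∑ i ∈ Finset.range (r+1), if j < i then a i * (1 - (-1:ℝ)^(i+j)) else 0)
        - lam * ((t₁ - t₀) * a j / (2*(j:ℝ)+1)) - (∑ i ∈ Finset.range (r+1), a i)
        = (-1:ℝ)^j := by
    intro j hj
    have happ := congrArg (fun p => Jint t₀ t₁ (p * K j)) hφ
    simp only [sub_mul] at happ
    rw [Jint_sub, Jint_sub, mul_assoc, Jint_Cmul] at happ
    rw [hdphiK j, hphiK j hj, hLopEK (φ.eval t₁) j hj, hLopK 1 j hj, one_mul, heval1] at happ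
    exact happ
  obtain ⟨c1, c2, c3, c4⟩ := algebra_main (t₁ - t₀) lam hk hlam r a E
  exact ⟨by rw [heval0]; exact c1, c2, c3, c4⟩
end

section
/- Let λ > 0 and let φ ∈ P^r satisfy φ' − λ φ − L̂(φ(t₁)) = L(1) on I. Then the leading rescaled Legendre coefficient a_r = ((2r+1)/k) ∫_I φ K_r dt satisfies |a_r| ≤ (1 + λk/(2(2r+1)))^{−1}. -/
open Polynomial MeasureTheory intervalIntegral

set_option maxHeartbeats 1000000

section Aux

variable {t₀ t₁ : ℝ} {K : ℕ → Polynomial ℝ}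

lemma legendre_repr (hK : IsLegendreBasis t₀ t₁ K) :
    ∀ n (p : Polynomial ℝ), p.natDegree ≤ n →
      ∃ c : ℕ → ℝ, p = ∑ i ∈ Finset.range (n + 1), Polynomial.C (c i) * K i := by
  intro n
  induction n with
  | zero =>
    intro p hp
    have hK0 : K 0 = 1 := by
      obtain ⟨a, ha⟩ := Polynomial.natDegree_eq_zero.mp (hK.1 0)
      have h1 := hK.2.1 0
      rw [← ha, Polynomial.eval_C] at h1
      rw [← ha, h1, Polynomial.C_1]
    refine ⟨fun _ => p.coeff 0, ?_⟩
    rw [Polynomial.eq_C_of_natDegree_le_zero hp]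
    simp [hK0]
  | succ n ih =>
    intro p hp
    have hKd : (K (n + 1)).natDegree = n + 1 := hK.1 (n + 1)
    have hKne : (K (n + 1)).coeff (n + 1) ≠ 0 := by
      have hne : K (n + 1) ≠ 0 := by
        intro h
        rw [h, Polynomial.natDegree_zero] at hKd
        exact Nat.succ_ne_zero n hKd.symm
      have h2 := Polynomial.leadingCoeff_ne_zero.mpr hne
      rwa [Polynomial.leadingCoeff, hKd] at h2
    set a : ℝ := p.coeff (n + 1) / (K (n + 1)).coeff (n + 1) with ha
    have hq : (p - Polynomial.C a * K (n + 1)).natDegree ≤ n := by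
      rw [Polynomial.natDegree_le_iff_coeff_eq_zero]
      intro N hN
      rcases eq_or_lt_of_le (Nat.succ_le_of_lt hN) with h | h
      · simp only [Polynomial.coeff_sub, Polynomial.coeff_C_mul, ← h, ha]
        field_simp
        ring
      · have h1 : p.coeff N = 0 := Polynomial.coeff_eq_zero_of_natDegree_lt (lt_of_le_of_lt hp h)
        have h2 : (K (n + 1)).coeff N = 0 :=
          Polynomial.coeff_eq_zero_of_natDegree_lt (by omega)
        simp [h1, h2]
    obtain ⟨c, hc⟩ := ih _ hq
    refine ⟨Function.update c (n + 1) a, ?_⟩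
    rw [Finset.sum_range_succ, Function.update_self]
    have hsame : ∀ i ∈ Finset.range (n + 1),
        Polynomial.C (Function.update c (n + 1) a i) * K i = Polynomial.C (c i) * K i := by
      intro i hi
      rw [Function.update_of_ne (by simp only [Finset.mem_range] at hi; omega)]
    rw [Finset.sum_congr rfl hsame, ← hc]
    ring

lemma pairK (hK : IsLegendreBasis t₀ t₁ K) (N : ℕ) (c : ℕ → ℝ) (j : ℕ) :
    (∫ t in t₀..t₁, (∑ i ∈ Finset.range N, c i * (K i).eval t) * (K j).eval t)
      = if j ∈ Finset.range N then c j * ((t₁ - t₀) / (2 * (j : ℝ) + 1)) else 0 := by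
  have h1 : ∀ t : ℝ, (∑ i ∈ Finset.range N, c i * (K i).eval t) * (K j).eval t
      = ∑ i ∈ Finset.range N, c i * ((K i).eval t * (K j).eval t) := by
    intro t
    rw [Finset.sum_mul]
    exact Finset.sum_congr rfl fun i _ => mul_assoc _ _ _
  simp only [h1]
  rw [intervalIntegral.integral_finset_sum (f := fun i t => c i * ((K i).eval t * (K j).eval t)) (fun i _ =>
    (continuous_const.mul ((K i).continuous.mul (K j).continuous)).intervalIntegrable _ _)]
  simp only [intervalIntegral.integral_const_mul, hK.2.2.2, mul_ite, mul_zero]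
  exact Finset.sum_ite_eq' (Finset.range N) j fun i => c i * ((t₁ - t₀) / (2 * (i : ℝ) + 1))

lemma bil (hK : IsLegendreBasis t₀ t₁ K) (N : ℕ) (c d : ℕ → ℝ) :
    (∫ t in t₀..t₁, (∑ i ∈ Finset.range N, c i * (K i).eval t) *
        (∑ j ∈ Finset.range N, d j * (K j).eval t))
      = ∑ i ∈ Finset.range N, c i * d i * ((t₁ - t₀) / (2 * (i : ℝ) + 1)) := by
  have h1 : ∀ t : ℝ, (∑ i ∈ Finset.range N, c i * (K i).eval t) *
      (∑ j ∈ Finset.range N, d j * (K j).eval t)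
      = ∑ j ∈ Finset.range N, d j * ((∑ i ∈ Finset.range N, c i * (K i).eval t) * (K j).eval t) := by
    intro t
    rw [Finset.mul_sum]
    exact Finset.sum_congr rfl fun j _ => by ring
  have hcont : Continuous fun t : ℝ => ∑ i ∈ Finset.range N, c i * (K i).eval t :=
    continuous_finset_sum _ fun i _ => continuous_const.mul (K i).continuous
  simp only [h1]
  rw [intervalIntegral.integral_finset_sum (f := fun j t => d j * ((∑ i ∈ Finset.range N, c i * (K i).eval t) * (K j).eval t)) (fun j _ =>
    (continuous_const.mul (hcont.mul (K j).continuous)).intervalIntegrable _ _)]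
  simp only [intervalIntegral.integral_const_mul, pairK hK]
  refine Finset.sum_congr rfl fun j hj => ?_
  rw [if_pos hj]
  ring

lemma integral_derivative (p : Polynomial ℝ) :
    ∫ t in t₀..t₁, (Polynomial.derivative p).eval t = p.eval t₁ - p.eval t₀ :=
  intervalIntegral.integral_deriv_eq_sub' (fun x => p.eval x)
    (funext fun x => (p.hasDerivAt x).deriv)
    (fun x _ => (p.hasDerivAt x).differentiableAt)
    ((Polynomial.derivative p).continuous.continuousOn)

end Aux

/-- Bound on the leading rescaled Legendre coefficient of the dG dual solution:
`|a_r| ≤ (1 + λ k / (2 (2 r + 1)))⁻¹`. -/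
theorem stmt_7 (t₀ t₁ : ℝ) (ht : t₀ < t₁) (r : ℕ) (K : ℕ → Polynomial ℝ)
    (hK : IsLegendreBasis t₀ t₁ K) (lam : ℝ) (hlam : 0 < lam)
    (φ : Polynomial ℝ) (hφdeg : φ.natDegree ≤ r)
    (hφ : Polynomial.derivative φ - Polynomial.C lam * φ - LopE t₀ t₁ r K (φ.eval t₁)
      = Lop t₀ t₁ r K 1) :
    |(2 * (r : ℝ) + 1) / (t₁ - t₀) * ∫ t in t₀..t₁, φ.eval t * (K r).eval t|
      ≤ (1 + lam * (t₁ - t₀) / (2 * (2 * (r : ℝ) + 1)))⁻¹ := by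
  have hk : (0 : ℝ) < t₁ - t₀ := sub_pos.mpr ht
  have hkne : (t₁ - t₀) ≠ 0 := sub_ne_zero.mpr ht.ne'
  have hm : (0 : ℝ) < 2 * (r : ℝ) + 1 := by positivity
  obtain ⟨c, hc⟩ := legendre_repr hK r φ hφdeg
  have hφev : ∀ t, φ.eval t = ∑ i ∈ Finset.range (r + 1), c i * (K i).eval t := by
    intro t; rw [hc]; simp [Polynomial.eval_finset_sum]
  have hLev : ∀ z t, (Lop t₀ t₁ r K z).eval t
      = ∑ i ∈ Finset.range (r + 1),
          (z / (t₁ - t₀) * ((-1 : ℝ) ^ i * (2 * (i : ℝ) + 1))) * (K i).eval t := by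
    intro z t
    simp only [Lop, Polynomial.eval_mul, Polynomial.eval_C, Polynomial.eval_finset_sum,
      Finset.mul_sum]
    exact Finset.sum_congr rfl fun i _ => by ring
  have hLEev : ∀ z t, (LopE t₀ t₁ r K z).eval t
      = ∑ i ∈ Finset.range (r + 1),
          (z / (t₁ - t₀) * (2 * (i : ℝ) + 1)) * (K i).eval t := by
    intro z t
    simp only [LopE, Polynomial.eval_mul, Polynomial.eval_C, Polynomial.eval_finset_sum,
      Finset.mul_sum]
    exact Finset.sum_congr rfl fun i _ => by ring
  -- individual integrals against K r
  have I1 : (∫ t in t₀..t₁, φ.eval t * (K r).eval t)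
      = c r * ((t₁ - t₀) / (2 * (r : ℝ) + 1)) := by
    simp only [hφev]
    rw [pairK hK, if_pos (Finset.self_mem_range_succ r)]
  have I2 : (∫ t in t₀..t₁, (Polynomial.derivative φ).eval t * (K r).eval t) = 0 := by
    rcases Nat.eq_zero_or_pos r with hr | hr
    · subst hr
      have : φ = Polynomial.C (φ.coeff 0) := Polynomial.eq_C_of_natDegree_le_zero hφdeg
      rw [this]
      simp
    · obtain ⟨s, rfl⟩ : ∃ s, r = s + 1 := ⟨r - 1, by omega⟩
      have hd : (Polynomial.derivative φ).natDegree ≤ s :=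
        le_trans (Polynomial.natDegree_derivative_le φ) (by omega)
      obtain ⟨d, hdrep⟩ := legendre_repr hK s _ hd
      have hdev : ∀ t, (Polynomial.derivative φ).eval t
          = ∑ i ∈ Finset.range (s + 1), d i * (K i).eval t := by
        intro t; rw [hdrep]; simp [Polynomial.eval_finset_sum]
      simp only [hdev]
      rw [pairK hK, if_neg (by simp)]
  have I3 : ∀ z, (∫ t in t₀..t₁, (Lop t₀ t₁ r K z).eval t * (K r).eval t)
      = z * (-1 : ℝ) ^ r := by
    intro z
    simp only [hLev]
    rw [pairK hK, if_pos (Finset.self_mem_range_succ r)]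
    field_simp
  have I4 : ∀ z, (∫ t in t₀..t₁, (LopE t₀ t₁ r K z).eval t * (K r).eval t) = z := by
    intro z
    simp only [hLEev]
    rw [pairK hK, if_pos (Finset.self_mem_range_succ r)]
    field_simp
  -- integrals against φ
  have I5 : (∫ t in t₀..t₁, (Polynomial.derivative φ).eval t * φ.eval t)
      = (φ.eval t₁ ^ 2 - φ.eval t₀ ^ 2) / 2 := by
    have h := integral_derivative (t₀ := t₀) (t₁ := t₁) (φ * φ)
    have h2 : (∫ t in t₀..t₁, (Polynomial.derivative (φ * φ)).eval t)
        = ∫ t in t₀..t₁, 2 * ((Polynomial.derivative φ).eval t * φ.eval t) := by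
      congr 1
      funext t
      simp [Polynomial.derivative_mul]
      ring
    rw [h2, intervalIntegral.integral_const_mul] at h
    simp only [Polynomial.eval_mul] at h
    nlinarith [h]
  have I6 : ∀ z, (∫ t in t₀..t₁, (Lop t₀ t₁ r K z).eval t * φ.eval t)
      = z * φ.eval t₀ := by
    intro z
    simp only [hLev, hφev]
    rw [bil hK]
    simp only [hK.2.2.1, Finset.mul_sum]
    refine Finset.sum_congr rfl fun i _ => ?_
    have h2i : (0:ℝ) < 2 * (i : ℝ) + 1 := by positivity
    field_simp
  have I7 : ∀ z, (∫ t in t₀..t₁, (LopE t₀ t₁ r K z).eval t * φ.eval t)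
      = z * φ.eval t₁ := by
    intro z
    simp only [hLEev, hφev]
    rw [bil hK]
    simp only [hK.2.1, Finset.mul_sum]
    refine Finset.sum_congr rfl fun i _ => ?_
    have h2i : (0:ℝ) < 2 * (i : ℝ) + 1 := by positivity
    field_simp
  have I8 : c r * c r * ((t₁ - t₀) / (2 * (r : ℝ) + 1))
      ≤ ∫ t in t₀..t₁, φ.eval t * φ.eval t := by
    have : (∫ t in t₀..t₁, φ.eval t * φ.eval t)
        = ∑ i ∈ Finset.range (r + 1), c i * c i * ((t₁ - t₀) / (2 * (i : ℝ) + 1)) := by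
      simp only [hφev]
      exact bil hK _ _ _
    rw [this]
    refine Finset.single_le_sum (f := fun i => c i * c i * ((t₁ - t₀) / (2 * (i : ℝ) + 1)))
      (fun i _ => ?_) (Finset.self_mem_range_succ r)
    have h2i : (0:ℝ) < 2 * (i : ℝ) + 1 := by positivity
    exact mul_nonneg (mul_self_nonneg _) (div_nonneg hk.le h2i.le)
  -- ODE tested against arbitrary polynomial
  have hode : ∀ t : ℝ, (Polynomial.derivative φ).eval t - lam * φ.eval t
      - (LopE t₀ t₁ r K (φ.eval t₁)).eval t = (Lop t₀ t₁ r K 1).eval t := by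
    intro t
    rw [← hφ]
    simp
  have key : ∀ q : Polynomial ℝ,
      (∫ t in t₀..t₁, (Polynomial.derivative φ).eval t * q.eval t)
        - lam * (∫ t in t₀..t₁, φ.eval t * q.eval t)
        - (∫ t in t₀..t₁, (LopE t₀ t₁ r K (φ.eval t₁)).eval t * q.eval t)
      = ∫ t in t₀..t₁, (Lop t₀ t₁ r K 1).eval t * q.eval t := by
    intro q
    have hA : IntervalIntegrable (fun t => (Polynomial.derivative φ).eval t * q.eval t)
        volume t₀ t₁ :=
      ((Polynomial.derivative φ).continuous.mul q.continuous).intervalIntegrable _ _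
    have hB : IntervalIntegrable (fun t => lam * (φ.eval t * q.eval t)) volume t₀ t₁ :=
      (continuous_const.mul (φ.continuous.mul q.continuous)).intervalIntegrable _ _
    have hC : IntervalIntegrable
        (fun t => (LopE t₀ t₁ r K (φ.eval t₁)).eval t * q.eval t) volume t₀ t₁ :=
      ((LopE t₀ t₁ r K (φ.eval t₁)).continuous.mul q.continuous).intervalIntegrable _ _
    rw [← intervalIntegral.integral_const_mul, ← intervalIntegral.integral_sub hA hB,
      ← intervalIntegral.integral_sub (hA.sub hB) hC]
    refine intervalIntegral.integral_congr fun t _ => ?_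
    have h := hode t
    calc (Polynomial.derivative φ).eval t * q.eval t - lam * (φ.eval t * q.eval t)
          - (LopE t₀ t₁ r K (φ.eval t₁)).eval t * q.eval t
        = ((Polynomial.derivative φ).eval t - lam * φ.eval t
            - (LopE t₀ t₁ r K (φ.eval t₁)).eval t) * q.eval t := by ring
      _ = (Lop t₀ t₁ r K 1).eval t * q.eval t := by rw [h]
  -- the two scalar equations
  set ar : ℝ := c r with har
  set b : ℝ := φ.eval t₁ with hb0
  set a0 : ℝ := φ.eval t₀ with ha0
  set S : ℝ := ∫ t in t₀..t₁, φ.eval t * φ.eval t with hS0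
  set ε : ℝ := (-1 : ℝ) ^ r with hε0
  have Eq1 : 0 - lam * (ar * ((t₁ - t₀) / (2 * (r : ℝ) + 1))) - b = 1 * ε := by
    have := key (K r)
    rw [I2, I1, I4, I3] at this
    exact this
  have Eq2 : (b ^ 2 - a0 ^ 2) / 2 - lam * S - b * b = 1 * a0 := by
    have := key φ
    rw [I5, I7, I6] at this
    exact this
  have hε : ε = 1 ∨ ε = -1 := by
    rcases Nat.even_or_odd r with h | h
    · left; rw [hε0, h.neg_one_pow]
    · right; rw [hε0, h.neg_one_pow]
  have hε2 : ε ^ 2 = 1 := by rcases hε with h | h <;> rw [h] <;> norm_num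
  set β : ℝ := lam * ((t₁ - t₀) / (2 * (r : ℝ) + 1)) with hβ0
  have hβ : (0 : ℝ) < β := by
    rw [hβ0]; positivity
  have hb : b = -ε - β * ar := by rw [hβ0]; linarith [Eq1]
  have hb2 : b ^ 2 = (ε + β * ar) ^ 2 := by rw [hb]; ring
  have hE2' : b ^ 2 + (a0 + 1) ^ 2 + 2 * (lam * S) = 1 := by linarith [Eq2]
  have hlamS : β * ar ^ 2 ≤ lam * S := by
    have := mul_le_mul_of_nonneg_left I8 hlam.le
    rw [hβ0]
    linarith [this]
  have hexp : b ^ 2 = ε ^ 2 + 2 * (ε * (β * ar)) + (β * ar) ^ 2 := by rw [hb]; ring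
  have hfac : β * (2 * ε * ar + (2 + β) * ar ^ 2) ≤ 0 := by
    linarith [hexp, hε2, hE2', hlamS, sq_nonneg (a0 + 1)]
  have hcomb : 2 * ε * ar + (2 + β) * ar ^ 2 ≤ 0 :=
    le_of_mul_le_mul_left (by linarith) hβ
  have habs : -|ar| ≤ ε * ar := by
    rcases hε with h | h
    · rw [h, one_mul]; exact neg_abs_le ar
    · rw [h, neg_one_mul, neg_le_neg_iff]; exact le_abs_self ar
  have h1 : (2 + β) * ar ^ 2 ≤ 2 * |ar| := by linarith
  have h2 : |ar| ≤ 2 / (2 + β) := by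
    rcases eq_or_ne ar 0 with h | h
    · rw [h, abs_zero]; positivity
    · have hpos : 0 < |ar| := abs_pos.mpr h
      rw [le_div_iff₀ (by linarith : (0:ℝ) < 2 + β)]
      have h3 : (2 + β) * |ar| ^ 2 ≤ 2 * |ar| := by rwa [sq_abs]
      nlinarith [h3, hpos]
  -- rewrite the goal
  have hval : (2 * (r : ℝ) + 1) / (t₁ - t₀) * (∫ t in t₀..t₁, φ.eval t * (K r).eval t) = ar := by
    rw [I1, har]
    field_simp
  rw [hval]
  have hR : (1 + lam * (t₁ - t₀) / (2 * (2 * (r : ℝ) + 1)))⁻¹ = 2 / (2 + β) := by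
    have hden : (1 + lam * (t₁ - t₀) / (2 * (2 * (r : ℝ) + 1))) = (2 + β) / 2 := by
      rw [hβ0, eq_div_iff (two_ne_zero (α := ℝ))]
      field_simp
    rw [hden, inv_div]
  rw [hR]
  exact h2
end
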